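/- arXiv:1303.1016 — 2 statements merged into one kernel-verified Lean document; each statement's English description precedes it below -/
import Mathlib

section
/- For every integer x ≥ 2, f(x) ≤ x − √x + 1 (as an inequality of real numbers, where f(x) is coerced to ℝ). -/
/-- Fuel-based helper for the recursive function `f`. For `k ≤ fuel`, `faux fuel k`
computes the value of `f k`. -/
def faux : ℕ → ℕ → ℕ
  | 0, _ => 1
  | fuel + 1, k =>
    if k ≤ 2 then 1
    else if k ≤ 4 then 2
    else
      min (faux fuel (k - 1) + 1)
        (((List.range k).filter (fun k1 => 3 ≤ k1 ∧ k1 ∣ k)).foldr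
          (fun k1 acc => min (k - k1 - k / k1 + 1 + max (faux fuel k1) (k / k1)) acc)
          (faux fuel (k - 1) + 1))

/-- `f 1 = 1`, `f 2 = 1`, `f 3 = 2`, `f 4 = 2`, and for `k > 4`,
`f k = min (f (k-1) + 1)
          (min over factorizations k = k₁·k₂ with 3 ≤ k₁ < k, 2 ≤ k₂ of
             k₁·k₂ - k₁ - k₂ + 1 + max (f k₁) k₂)`,
where the inner minimum is omitted when no such factorization exists.
(Note: for a divisor `k₁` of `k` with `3 ≤ k₁ < k`, the cofactor `k₂ = k / k₁`
automatically satisfies `k₂ ≥ 2`.) -/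
def f (k : ℕ) : ℕ := faux k k

lemma faux_succ (fuel k : ℕ) (h : ¬ k ≤ 4) : faux (fuel+1) k = min (faux fuel (k - 1) + 1)
        (((List.range k).filter (fun k1 => 3 ≤ k1 ∧ k1 ∣ k)).foldr
          (fun k1 acc => min (k - k1 - k / k1 + 1 + max (faux fuel k1) (k / k1)) acc)
          (faux fuel (k - 1) + 1)) := by
  rw [faux]
  rw [if_neg (by omega), if_neg h]

lemma faux_small (fuel k : ℕ) (h : k ≤ 2) : faux fuel k = 1 := by
  cases fuel with
  | zero => rfl
  | succ a => rw [faux, if_pos h]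

lemma foldr_min_le (g : ℕ → ℕ) (i : ℕ) : ∀ (l : List ℕ), ∀ a ∈ l,
    l.foldr (fun x acc => min (g x) acc) i ≤ g a := by
  intro l
  induction l with
  | nil => simp
  | cons b t ih =>
    intro a ha
    simp only [List.foldr_cons]
    rcases List.mem_cons.1 ha with h | h
    · subst h; exact min_le_left _ _
    · exact le_trans (min_le_right _ _) (ih a h)

lemma foldr_min_congr (g g' : ℕ → ℕ) (i : ℕ) (l : List ℕ)
    (h : ∀ a ∈ l, g a = g' a) :
    l.foldr (fun x acc => min (g x) acc) i = l.foldr (fun x acc => min (g' x) acc) i := by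
  induction l with
  | nil => rfl
  | cons b t ih =>
    simp only [List.foldr_cons]
    rw [h b List.mem_cons_self, ih (fun a ha => h a (List.mem_cons_of_mem _ ha))]

lemma faux_fuel (k : ℕ) : ∀ fuel fuel', k ≤ fuel → k ≤ fuel' → faux fuel k = faux fuel' k := by
  induction k using Nat.strong_induction_on with
  | _ k ih =>
    intro fuel fuel' h h'
    match fuel, fuel' with
    | 0, 0 => rfl
    | 0, b+1 =>
      have hk : k = 0 := Nat.le_zero.1 h
      subst hk
      rw [faux_small, faux_small] <;> omega
    | a+1, 0 =>
      have hk : k = 0 := Nat.le_zero.1 h'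
      subst hk
      rw [faux_small, faux_small] <;> omega
    | a+1, b+1 =>
      by_cases h4 : k ≤ 4
      · rw [faux, faux]
        split_ifs <;> rfl
      · rw [faux_succ a k h4, faux_succ b k h4]
        have h1 : faux a (k-1) = faux b (k-1) :=
          ih (k-1) (by omega) a b (by omega) (by omega)
        rw [h1]
        have h2 : ((List.range k).filter (fun k1 => 3 ≤ k1 ∧ k1 ∣ k)).foldr
          (fun k1 acc => min (k - k1 - k / k1 + 1 + max (faux a k1) (k / k1)) acc)
          (faux b (k-1) + 1) = ((List.range k).filter (fun k1 => 3 ≤ k1 ∧ k1 ∣ k)).foldr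
          (fun k1 acc => min (k - k1 - k / k1 + 1 + max (faux b k1) (k / k1)) acc)
          (faux b (k-1) + 1) := by
          apply foldr_min_congr
            (fun k1 => k - k1 - k / k1 + 1 + max (faux a k1) (k / k1))
            (fun k1 => k - k1 - k / k1 + 1 + max (faux b k1) (k / k1))
          intro y hy
          have hyk : y < k := List.mem_range.1 (List.mem_of_mem_filter hy)
          rw [ih y hyk a b (by omega) (by omega)]
        rw [h2]

lemma f_eq (k : ℕ) (h : 5 ≤ k) : f k = min (f (k-1) + 1)
    (((List.range k).filter (fun k1 => 3 ≤ k1 ∧ k1 ∣ k)).foldr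
      (fun k1 acc => min (k - k1 - k / k1 + 1 + max (faux (k-1) k1) (k / k1)) acc)
      (f (k-1) + 1)) := by
  obtain ⟨m, rfl⟩ : ∃ m, k = m + 5 := ⟨k - 5, by omega⟩
  show faux (m+4+1) (m+5) = _
  rw [faux_succ (m+4) (m+5) (by omega)]
  rfl

lemma f_succ_le (k : ℕ) : f (k+1) ≤ f k + 1 := by
  match k with
  | 0 => decide
  | 1 => decide
  | 2 => decide
  | 3 => decide
  | (m+4) =>
    rw [f_eq (m+5) (by omega)]
    exact min_le_left _ _

lemma f_add_le (m d : ℕ) : f (m + d) ≤ f m + d := by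
  induction d with
  | zero => simp
  | succ n ih =>
    calc f (m + n + 1) ≤ f (m + n) + 1 := f_succ_le _
    _ ≤ f m + n + 1 := by omega

lemma f_mul (k k1 : ℕ) (h3 : 3 ≤ k1) (hlt : k1 < k) (hdvd : k1 ∣ k) :
    f k ≤ k - k1 - k / k1 + 1 + max (f k1) (k / k1) := by
  have hk : 5 ≤ k := by
    obtain ⟨c, rfl⟩ := hdvd
    have hc : 2 ≤ c := by
      rcases c with _ | _ | c
      · omega
      · omega
      · omega
    nlinarith
  rw [f_eq k hk]
  refine le_trans (min_le_right _ _) ?_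
  have hmem : k1 ∈ (List.range k).filter (fun k1 => 3 ≤ k1 ∧ k1 ∣ k) := by
    rw [List.mem_filter, List.mem_range]
    exact ⟨hlt, by simp [h3, hdvd]⟩
  refine le_trans (foldr_min_le
    (fun x => k - x - k / x + 1 + max (faux (k-1) x) (k / x)) _ _ k1 hmem) ?_
  have hf : faux (k-1) k1 = f k1 := faux_fuel k1 (k-1) k1 (by omega) (le_refl _)
  show k - k1 - k / k1 + 1 + max (faux (k-1) k1) (k / k1) ≤ _
  rw [hf]

lemma key (x : ℕ) (hx : 2 ≤ x) : f x + Nat.sqrt (x - 1) ≤ x := by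
  induction x using Nat.strong_induction_on with
  | _ x ih =>
    by_cases hsmall : x ≤ 9
    · interval_cases x
      · rw [show Nat.sqrt (2-1) = 1 from Nat.eq_sqrt.2 (by norm_num) |>.symm]; decide
      · rw [show Nat.sqrt (3-1) = 1 from Nat.eq_sqrt.2 (by norm_num) |>.symm]; decide
      · rw [show Nat.sqrt (4-1) = 1 from Nat.eq_sqrt.2 (by norm_num) |>.symm]; decide
      · rw [show Nat.sqrt (5-1) = 2 from Nat.eq_sqrt.2 (by norm_num) |>.symm]; decide
      · rw [show Nat.sqrt (6-1) = 2 from Nat.eq_sqrt.2 (by norm_num) |>.symm]; decide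
      · rw [show Nat.sqrt (7-1) = 2 from Nat.eq_sqrt.2 (by norm_num) |>.symm]; decide
      · rw [show Nat.sqrt (8-1) = 2 from Nat.eq_sqrt.2 (by norm_num) |>.symm]; decide
      · rw [show Nat.sqrt (9-1) = 2 from Nat.eq_sqrt.2 (by norm_num) |>.symm]; decide
    · push_neg at hsmall
      have hs2 : Nat.sqrt (x-1) * Nat.sqrt (x-1) ≤ x - 1 := Nat.sqrt_le (x - 1)
      have hx2 : x - 1 < (Nat.sqrt (x-1) + 1) * (Nat.sqrt (x-1) + 1) :=
        Nat.lt_succ_sqrt (x - 1)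
      have hs3 : 3 ≤ Nat.sqrt (x-1) := Nat.le_sqrt.2 (by omega)
      obtain ⟨t, ht⟩ : ∃ t, Nat.sqrt (x - 1) = t + 3 := ⟨Nat.sqrt (x-1) - 3, by omega⟩
      rw [ht] at hs2 hx2 ⊢
      have hsq1 : (t+3) * (t+3) = t*t + 6*t + 9 := by ring
      have hsq2 : (t+4) * (t+4) = t*t + 8*t + 16 := by ring
      -- b := x / (t+4)
      obtain ⟨b, hb⟩ : ∃ b, x / (t+4) = b := ⟨_, rfl⟩
      have hbge : t + 2 ≤ b := by
        rw [← hb, Nat.le_div_iff_mul_le (by omega)]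
        have : (t+2) * (t+4) + 1 = (t+3) * (t+3) := by ring
        omega
      have hb2 : 2 ≤ b := by omega
      have hfn : f (t+4) ≤ t + 2 := by
        rcases Nat.eq_zero_or_pos t with rfl | htpos
        · decide
        · have hnx : t + 4 < x := by
            rw [hsq1] at hs2; omega
          have hih := ih (t+4) hnx (by omega)
          have hsq : 2 ≤ Nat.sqrt (t+4-1) := Nat.le_sqrt.2 (by omega)
          omega
      have hm : (t+4) * b ≤ x := by
        rw [← hb, mul_comm]
        exact Nat.div_mul_le_self x (t+4)
      obtain ⟨m, hmeq⟩ : ∃ m, (t+4) * b = m := ⟨_, rfl⟩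
      have hfm : f m ≤ m - (t+4) - b + 1 + b := by
        have hlt : t + 4 < m := by
          have h5 : (t+4)*2 ≤ (t+4)*b := Nat.mul_le_mul_left _ hb2
          omega
        have hdiv : m / (t+4) = b := by
          rw [← hmeq]; exact Nat.mul_div_cancel_left b (by omega)
        have hmul := f_mul m (t+4) (by omega) hlt ⟨b, hmeq.symm⟩
        rw [hdiv] at hmul
        have hmax : max (f (t+4)) b = b := max_eq_right (by omega)
        rw [hmax] at hmul
        exact hmul
      rw [hmeq] at hm
      have hchain : f x ≤ f m + (x - m) := by
        have h0 := f_add_le m (x - m)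
        rwa [show m + (x - m) = x by omega] at h0
      have hnb : (t+4) + b ≤ m := by
        rw [← hmeq]; exact Nat.add_le_mul (by omega) hb2
      omega

/-- For every integer `x ≥ 2`, `f x ≤ x - √x + 1` as real numbers. -/
theorem stmt_0 (x : ℕ) (hx : 2 ≤ x) :
    (f x : ℝ) ≤ (x : ℝ) - Real.sqrt x + 1 := by
  have hk := key x hx
  have hx2 : x - 1 < (Nat.sqrt (x-1) + 1) * (Nat.sqrt (x-1) + 1) := Nat.lt_succ_sqrt (x - 1)
  set s := Nat.sqrt (x - 1) with hs
  have hxr : (x : ℝ) ≤ ((s : ℝ) + 1) ^ 2 := by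
    have h1 : x ≤ (s + 1) * (s + 1) := by omega
    have h2 := (Nat.cast_le (α := ℝ)).2 h1
    push_cast at h2
    nlinarith
  have hsqrt : Real.sqrt x ≤ (s : ℝ) + 1 := by
    have h1 : Real.sqrt x ≤ Real.sqrt (((s : ℝ) + 1) ^ 2) := Real.sqrt_le_sqrt hxr
    rwa [Real.sqrt_sq (by positivity)] at h1
  have hfx : (f x : ℝ) + s ≤ x := by
    have h3 := (Nat.cast_le (α := ℝ)).2 hk
    push_cast at h3
    linarith
  linarith
end

section
/- For every integer v ≥ 3, the least integer k ≥ 2 such that k − f(k) ≥ v is equal to min( (v+1)·f(v+1), (v+2)·(f(v+2) − 1) ). -/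
namespace Aux

lemma fold_le_init (l : List ℕ) (e : ℕ → ℕ) (i : ℕ) :
    l.foldr (fun a acc => min (e a) acc) i ≤ i := by
  induction l with
  | nil => simp
  | cons a l ih => exact le_trans (min_le_right _ _) ih

lemma fold_le_mem (l : List ℕ) (e : ℕ → ℕ) (i : ℕ) {a : ℕ} (h : a ∈ l) :
    l.foldr (fun a acc => min (e a) acc) i ≤ e a := by
  induction l with
  | nil => simp at h
  | cons b l ih =>
    rcases List.mem_cons.1 h with rfl | h
    · exact min_le_left _ _
    · exact le_trans (min_le_right _ _) (ih h)

lemma le_fold (l : List ℕ) (e : ℕ → ℕ) (i : ℕ) {x : ℕ} (h1 : ∀ a ∈ l, x ≤ e a)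
    (h2 : x ≤ i) : x ≤ l.foldr (fun a acc => min (e a) acc) i := by
  induction l with
  | nil => simpa
  | cons b l ih =>
    exact le_min (h1 b (List.mem_cons_self))
      (ih fun a ha => h1 a (List.mem_cons_of_mem _ ha))

lemma fold_cases (l : List ℕ) (e : ℕ → ℕ) (i : ℕ) :
    l.foldr (fun a acc => min (e a) acc) i = i ∨
      ∃ a ∈ l, l.foldr (fun a acc => min (e a) acc) i = e a := by
  induction l with
  | nil => left; rfl
  | cons b l ih =>
    rcases min_cases (e b) (l.foldr (fun a acc => min (e a) acc) i) with ⟨h, _⟩ | ⟨h, _⟩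
    · right; exact ⟨b, List.mem_cons_self, h⟩
    · rcases ih with h' | ⟨a, ha, h'⟩
      · left; simpa [h] using h'
      · right; exact ⟨a, List.mem_cons_of_mem _ ha, by simpa [h] using h'⟩

lemma fold_congr (l : List ℕ) (e1 e2 : ℕ → ℕ) (i : ℕ) (h : ∀ a ∈ l, e1 a = e2 a) :
    l.foldr (fun a acc => min (e1 a) acc) i = l.foldr (fun a acc => min (e2 a) acc) i := by
  induction l with
  | nil => rfl
  | cons b l ih =>
    simp only [List.foldr_cons, h b (List.mem_cons_self),
      ih fun a ha => h a (List.mem_cons_of_mem _ ha)]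

lemma faux_small {k : ℕ} (m : ℕ) (h : k ≤ 2) : faux m k = 1 := by
  cases m with
  | zero => rfl
  | succ m => simp [faux, h]

lemma faux_stab : ∀ k m n, k ≤ m → k ≤ n → faux m k = faux n k := by
  intro k
  induction k using Nat.strong_induction_on with
  | _ k IH =>
    intro m n hm hn
    by_cases h2 : k ≤ 2
    · rw [faux_small m h2, faux_small n h2]
    · push_neg at h2
      obtain ⟨m, rfl⟩ : ∃ m', m = m' + 1 := ⟨m - 1, by omega⟩
      obtain ⟨n, rfl⟩ : ∃ n', n = n' + 1 := ⟨n - 1, by omega⟩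
      by_cases h4 : k ≤ 4
      · simp [faux, h4, show ¬ k ≤ 2 by omega]
      · simp only [faux, if_neg (show ¬ k ≤ 2 by omega), if_neg h4]
        have hprev : faux m (k - 1) = faux n (k - 1) :=
          IH (k - 1) (by omega) m n (by omega) (by omega)
        rw [hprev]
        congr 1
        apply fold_congr
        intro a ha
        have hlt : a < k := List.mem_range.1 (List.mem_of_mem_filter ha)
        rw [IH a hlt m n (by omega) (by omega)]

lemma f_eq5 {k : ℕ} (hk : 5 ≤ k) :
    f k = min (f (k - 1) + 1)
        (((List.range k).filter (fun k1 => 3 ≤ k1 ∧ k1 ∣ k)).foldr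
          (fun k1 acc => min (k - k1 - k / k1 + 1 + max (f k1) (k / k1)) acc)
          (f (k - 1) + 1)) := by
  obtain ⟨m, rfl⟩ : ∃ m', k = m' + 1 := ⟨k - 1, by omega⟩
  show faux (m + 1) (m + 1) = _
  simp only [faux, if_neg (show ¬ m + 1 ≤ 2 by omega), if_neg (show ¬ m + 1 ≤ 4 by omega)]
  have hprev : faux m (m + 1 - 1) = f (m + 1 - 1) := by
    simp only [Nat.add_sub_cancel]
    exact faux_stab m m m le_rfl le_rfl
  rw [hprev]
  congr 1
  apply fold_congr
  intro a ha
  have hlt : a < m + 1 := List.mem_range.1 (List.mem_of_mem_filter ha)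
  rw [show faux m a = f a from faux_stab a m a (by omega) le_rfl]

end Aux

namespace Aux

lemma f0 : f 0 = 1 := by decide
lemma f1 : f 1 = 1 := by decide
lemma f2 : f 2 = 1 := by decide
lemma f3 : f 3 = 2 := by decide
lemma f4 : f 4 = 2 := by decide
lemma f5 : f 5 = 3 := by decide
lemma f6 : f 6 = 4 := by decide
lemma f7 : f 7 = 5 := by decide

end Aux

namespace Aux

lemma sub_identity {k1 k2 : ℕ} (h1 : 1 ≤ k1) (h2 : 1 ≤ k2) :
    k1 * k2 + 1 = (k1 - 1) * (k2 - 1) + k1 + k2 := by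
  obtain ⟨a, rfl⟩ : ∃ a, k1 = a + 1 := ⟨k1 - 1, by omega⟩
  obtain ⟨b, rfl⟩ : ∃ b, k2 = b + 1 := ⟨k2 - 1, by omega⟩
  simp only [Nat.add_sub_cancel]
  ring

lemma f_succ_le (k : ℕ) : f (k + 1) ≤ f k + 1 := by
  by_cases hk : 5 ≤ k + 1
  · rw [f_eq5 hk]
    simpa using min_le_left _ _
  · have hk3 : k ≤ 3 := by omega
    interval_cases k <;> simp [f0, f1, f2, f3, f4, f5]

lemma f_add_le (j d : ℕ) : f (j + d) ≤ f j + d := by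
  induction d with
  | zero => simp
  | succ d ih => calc f (j + d + 1) ≤ f (j + d) + 1 := f_succ_le _
                  _ ≤ f j + (d + 1) := by omega

lemma f_le_of_le {j k : ℕ} (h : j ≤ k) : f k ≤ f j + (k - j) := by
  have := f_add_le j (k - j)
  rwa [show j + (k - j) = k by omega] at this

/-- divisor upper bound -/
lemma f_mul_le {k1 k2 : ℕ} (h1 : 3 ≤ k1) (h2 : 2 ≤ k2) :
    f (k1 * k2) ≤ (k1 - 1) * (k2 - 1) + max (f k1) k2 := by
  set k := k1 * k2 with hk
  have hk6 : 6 ≤ k := le_trans (by norm_num) (Nat.mul_le_mul h1 h2)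
  have hdiv : k / k1 = k2 := by rw [hk, Nat.mul_div_cancel_left _ (by omega)]
  have hmem : k1 ∈ (List.range k).filter (fun k1 => 3 ≤ k1 ∧ k1 ∣ k) := by
    simp only [List.mem_filter, List.mem_range, decide_eq_true_eq]
    have : k1 * 2 ≤ k1 * k2 := Nat.mul_le_mul_left _ h2
    exact ⟨by omega, h1, Dvd.intro k2 rfl⟩
  have hb : ((List.range k).filter (fun k1 => 3 ≤ k1 ∧ k1 ∣ k)).foldr
      (fun k1 acc => min (k - k1 - k / k1 + 1 + max (f k1) (k / k1)) acc) (f (k - 1) + 1)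
      ≤ k - k1 - k2 + 1 + max (f k1) k2 := by
    have h := fold_le_mem ((List.range k).filter (fun k1 => 3 ≤ k1 ∧ k1 ∣ k))
      (fun k1 => k - k1 - k / k1 + 1 + max (f k1) (k / k1)) (f (k - 1) + 1) hmem
    simpa only [hdiv] using h
  have hle := (f_eq5 (by omega)).trans_le (le_trans (min_le_right _ _) hb)
  have hid := sub_identity (show 1 ≤ k1 by omega) (show 1 ≤ k2 by omega)
  rw [← hk] at hid
  set Q := (k1 - 1) * (k2 - 1) with hQ
  have hQpos : 1 ≤ Q := by
    rw [hQ]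
    have := Nat.mul_le_mul (show 1 ≤ k1 - 1 by omega) (show 1 ≤ k2 - 1 by omega)
    simpa using this
  clear_value Q
  clear hQ hb hmem hdiv
  clear_value k
  clear hk
  rcases Nat.le_total (f k1) k2 with hm | hm
  · rw [max_eq_right hm] at hle ⊢
    omega
  · rw [max_eq_left hm] at hle ⊢
    omega

lemma f_mono_succ (k : ℕ) : f k ≤ f (k + 1) := by
  by_cases hk : 5 ≤ k + 1
  · rw [f_eq5 hk]
    simp only [Nat.add_sub_cancel]
    refine le_min (by omega) (le_fold _ _ _ ?_ (by omega))
    intro k1 hk1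
    simp only [List.mem_filter, List.mem_range, decide_eq_true_eq] at hk1
    obtain ⟨hlt, h3, hdvd⟩ := hk1
    obtain ⟨k2, hk2⟩ := hdvd
    have hk2ge : 2 ≤ k2 := by
      rcases Nat.lt_or_ge k2 2 with h | h
      · interval_cases k2 <;> omega
      · exact h
    have hdiv : (k + 1) / k1 = k2 := by rw [hk2, Nat.mul_div_cancel_left _ (by omega)]
    rw [hdiv]
    have hid := sub_identity (show 1 ≤ k1 by omega) (show 1 ≤ k2 by omega)
    rw [← hk2] at hid
    -- goal : f k ≤ k + 1 - k1 - k2 + 1 + max (f k1) k2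
    rcases Nat.lt_or_ge k2 3 with h3' | h3'
    · -- k2 = 2
      have hk2' : k2 = 2 := by omega
      subst hk2'
      have : f k ≤ f k1 + (k - k1) := f_le_of_le (by omega)
      have hmax : f k1 ≤ max (f k1) 2 := le_max_left _ _
      omega
    · -- k2 ≥ 3
      have hstep : f k ≤ f (k1 * (k2 - 1)) + (k - k1 * (k2 - 1)) := by
        apply f_le_of_le
        have : k1 * (k2 - 1) + k1 = k1 * k2 := by
          obtain ⟨b, rfl⟩ : ∃ b, k2 = b + 1 := ⟨k2 - 1, by omega⟩
          simp only [Nat.add_sub_cancel]; ring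
        omega
      have hmul : f (k1 * (k2 - 1)) ≤ (k1 - 1) * (k2 - 1 - 1) + max (f k1) (k2 - 1) :=
        f_mul_le h3 (by omega)
      have hmax : max (f k1) (k2 - 1) ≤ max (f k1) k2 := max_le (le_max_left _ _) (by omega)
      have hone : k1 * (k2 - 1) + k1 = k1 * k2 := by
        obtain ⟨b, rfl⟩ : ∃ b, k2 = b + 1 := ⟨k2 - 1, by omega⟩
        simp only [Nat.add_sub_cancel]; ring
      have hid2 : (k1 - 1) * (k2 - 1 - 1) + (k1 - 1) = (k1 - 1) * (k2 - 1) := by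
        obtain ⟨b, rfl⟩ : ∃ b, k2 = b + 2 := ⟨k2 - 2, by omega⟩
        obtain ⟨a, rfl⟩ : ∃ a, k1 = a + 1 := ⟨k1 - 1, by omega⟩
        simp only [Nat.add_sub_cancel, show a + 1 - 1 = a by omega,
          show b + 2 - 1 = b + 1 by omega, show b + 2 - 1 - 1 = b by omega]
        ring
      omega
  · have hk3 : k ≤ 3 := by omega
    interval_cases k <;> simp [f0, f1, f2, f3, f4]

lemma f_mono {j k : ℕ} (h : j ≤ k) : f j ≤ f k := by
  induction k with
  | zero => simp_all
  | succ k ih =>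
    rcases Nat.lt_or_ge j (k + 1) with h' | h'
    · exact le_trans (ih (by omega)) (f_mono_succ k)
    · have : j = k + 1 := by omega
      simp [this]

lemma g_mono {x j k : ℕ} (hj : x + f j ≤ j) (hjk : j ≤ k) : x + f k ≤ k := by
  have := f_le_of_le hjk
  omega

lemma f_le_sub2 {k : ℕ} (h : 4 ≤ k) : f k + 2 ≤ k := by
  have h4 : f 4 + 2 ≤ 4 := by simp [f4]
  have := f_le_of_le h
  omega

end Aux

namespace Aux

lemma f_ge2 {k : ℕ} (h : 3 ≤ k) : 2 ≤ f k := le_trans (by rw [f3]) (f_mono h)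

lemma f_ge3 {k : ℕ} (h : 5 ≤ k) : 3 ≤ f k := le_trans (by rw [f5]) (f_mono h)

lemma mem_bound {x c : ℕ} (hx : 3 ≤ x) (hc : 2 ≤ c) (hcf : c ≤ f x) :
    f (x * c) + x + c ≤ x * c + 1 + f x := by
  have h := f_mul_le hx hc
  rw [max_eq_left hcf] at h
  have hid := sub_identity (show 1 ≤ x by omega) (show 1 ≤ c by omega)
  omega

lemma quad {t s A F1 : ℕ} (ht : 3 ≤ t) (hF : F1 ≤ s + 2) (hA1 : t + s + 3 ≤ A)
    (hA2 : 3 * t + 3 ≤ A) : (t + s + 1) * F1 ≤ A * (s + 1) := by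
  have h0 : (t + s + 1) * F1 ≤ (t + s + 1) * (s + 2) := Nat.mul_le_mul_left _ hF
  by_cases hst : t ≤ s + 1
  · have h1 : (t + s + 1) * (s + 2) ≤ (t + s + 3) * (s + 1) := by nlinarith
    have h2 : (t + s + 3) * (s + 1) ≤ A * (s + 1) := Nat.mul_le_mul_right _ hA1
    omega
  · push_neg at hst
    have hs_le : s + 2 ≤ t := by omega
    have h1 : (t + s + 1) * (s + 2) ≤ (3 * t + 3) * (s + 1) := by
      have hss : s * s ≤ s * t := Nat.mul_le_mul_left _ (by omega)
      nlinarith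
    have h2 : (3 * t + 3) * (s + 1) ≤ A * (s + 1) := Nat.mul_le_mul_right _ hA2
    omega

lemma KL {t s : ℕ} (ht : 3 ≤ t) (hs : 1 ≤ s) (hc : s + 3 ≤ f (t + s + 2)) :
    (t + s + 1) * f (t + s + 1) ≤
      min ((t + 1) * f (t + 1)) ((t + 2) * (f (t + 2) - 1)) * (s + 1) := by
  obtain ⟨a, hfa⟩ : ∃ x, f (t + 1) = x := ⟨_, rfl⟩
  obtain ⟨b, hfb⟩ : ∃ x, f (t + 2) = x := ⟨_, rfl⟩
  rw [hfa, hfb]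
  have hab1 : a ≤ b := by rw [← hfa, ← hfb]; exact f_mono (by omega)
  have hab2 : b ≤ a + 1 := by rw [← hfa, ← hfb]; exact f_succ_le (t + 1)
  have ha2 : 2 ≤ a := by rw [← hfa]; exact f_ge2 (by omega)
  have hat : a + 2 ≤ t + 1 := by rw [← hfa]; exact f_le_sub2 (by omega)
  have hb3 : 3 ≤ b := by rw [← hfb]; exact f_ge3 (by omega)
  rcases (show b = a ∨ b = a + 1 by omega) with hba | hba
  · -- case b = a
    have ha3 : 3 ≤ a := by omega
    have hmin : min ((t + 1) * a) ((t + 2) * (b - 1)) = (t + 2) * (a - 1) := by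
      rw [hba]
      refine min_eq_right ?_
      have h1 : (t + 2) * (a - 1) + (t + 2) = (t + 2) * a := by
        obtain ⟨a', rfl⟩ : ∃ a', a = a' + 1 := ⟨a - 1, by omega⟩
        simp only [Nat.add_sub_cancel]; ring
      have h2 : (t + 2) * a = (t + 1) * a + a := by ring
      omega
    rw [hmin]
    -- membership: g((t+2)(a-1)) ≥ t
    have hmb : f ((t + 2) * (a - 1)) + (t + 2) + (a - 1) ≤ (t + 2) * (a - 1) + 1 + a := by
      have := mem_bound (x := t + 2) (c := a - 1) (by omega) (by omega) (by rw [hfb]; omega)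
      rw [hfb, hba] at this
      exact this
    have hg : t + f ((t + 2) * (a - 1)) ≤ (t + 2) * (a - 1) := by omega
    have hA : t + s + 3 ≤ (t + 2) * (a - 1) := by
      by_contra h
      push_neg at h
      have := g_mono hg (show (t + 2) * (a - 1) ≤ t + s + 2 by omega)
      omega
    have h1 : f (t + s + 1) ≤ a + s - 1 := by
      have := f_le_of_le (show t + 2 ≤ t + s + 1 by omega)
      rw [hfb] at this
      omega
    by_cases hcase : s ≤ (t + 1) * (a - 2)
    · have hmain : (t + s + 1) * (a + s - 1) ≤ (t + 2) * (a - 1) * (s + 1) := by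
        obtain ⟨a', rfl⟩ : ∃ a', a = a' + 3 := ⟨a - 3, by omega⟩
        have hc' : s ≤ (t + 1) * (a' + 1) := by
          have e0 : a' + 3 - 2 = a' + 1 := by omega
          rwa [e0] at hcase
        have hss : s * s ≤ s * ((t + 1) * (a' + 1)) := Nat.mul_le_mul_left _ hc'
        have e1 : a' + 3 + s - 1 = a' + s + 2 := by omega
        have e2 : a' + 3 - 1 = a' + 2 := by omega
        rw [e1, e2]
        nlinarith
      calc (t + s + 1) * f (t + s + 1) ≤ (t + s + 1) * (a + s - 1) :=
            Nat.mul_le_mul_left _ h1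
        _ ≤ (t + 2) * (a - 1) * (s + 1) := hmain
    · push_neg at hcase
      have ha4 : 4 ≤ a := by
        by_contra h
        push_neg at h
        have ha3' : a = 3 := by omega
        subst ha3'
        norm_num at hA hcase
        omega
      have hmb2 : f ((t + 2) * (a - 2)) + (t + 2) + (a - 2) ≤ (t + 2) * (a - 2) + 1 + a := by
        have := mem_bound (x := t + 2) (c := a - 2) (by omega) (by omega) (by rw [hfb]; omega)
        rw [hfb, hba] at this
        exact this
      have hg2 : (t - 1) + f ((t + 2) * (a - 2)) ≤ (t + 2) * (a - 2) := by omega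
      have hle2 : (t + 2) * (a - 2) ≤ t + s + 1 := by
        have h1' : (t + 2) * (a - 2) = (t + 1) * (a - 2) + (a - 2) := by ring
        omega
      have hfv1 : f (t + s + 1) ≤ s + 2 := by
        have := g_mono hg2 hle2
        omega
      exact quad ht hfv1 hA (by
        have : 3 * (t + 2) ≤ (t + 2) * (a - 1) := by
          have := Nat.mul_le_mul_left (t + 2) (show 3 ≤ a - 1 by omega)
          omega
        omega)
  · -- case b = a + 1
    have hmin : min ((t + 1) * a) ((t + 2) * (b - 1)) = (t + 1) * a := by
      rw [hba]
      simp only [Nat.add_sub_cancel]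
      exact min_eq_left (Nat.mul_le_mul_right _ (by omega))
    rw [hmin]
    have h1 : f (t + s + 1) ≤ a + s := by
      have := f_le_of_le (show t + 1 ≤ t + s + 1 by omega)
      rw [hfa] at this
      omega
    by_cases hv : t + s + 1 ≤ a * t
    · have hmain : (t + s + 1) * (a + s) ≤ (t + 1) * a * (s + 1) := by
        have hss : s * (t + s + 1) ≤ s * (a * t) := Nat.mul_le_mul_left _ hv
        nlinarith
      calc (t + s + 1) * f (t + s + 1) ≤ (t + s + 1) * (a + s) := Nat.mul_le_mul_left _ h1
        _ ≤ (t + 1) * a * (s + 1) := hmain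
    · push_neg at hv
      have hmb : f ((t + 1) * a) + (t + 1) + a ≤ (t + 1) * a + 1 + a := by
        have := mem_bound (x := t + 1) (c := a) (by omega) (by omega) hfa.ge
        rw [hfa] at this
        exact this
      have hg : t + f ((t + 1) * a) ≤ (t + 1) * a := by omega
      have hA : t + s + 3 ≤ (t + 1) * a := by
        by_contra h
        push_neg at h
        have := g_mono hg (show (t + 1) * a ≤ t + s + 2 by omega)
        omega
      have ha3 : 3 ≤ a := by
        have : (t + 1) * a = a * t + a := by ring
        omega
      have hmb2 : f ((t + 1) * (a - 1)) + (t + 1) + (a - 1) ≤ (t + 1) * (a - 1) + 1 + a := by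
        have := mem_bound (x := t + 1) (c := a - 1) (by omega) (by omega) (by rw [hfa]; omega)
        rw [hfa] at this
        exact this
      have hg2 : (t - 1) + f ((t + 1) * (a - 1)) ≤ (t + 1) * (a - 1) := by omega
      have hle2 : (t + 1) * (a - 1) ≤ t + s + 1 := by
        have h1' : (t + 1) * (a - 1) + (t + 1) = (t + 1) * a := by
          obtain ⟨a', rfl⟩ : ∃ a', a = a' + 1 := ⟨a - 1, by omega⟩
          simp only [Nat.add_sub_cancel]; ring
        have h2' : (t + 1) * a = a * t + a := by ring
        omega
      have hfv1 : f (t + s + 1) ≤ s + 2 := by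
        have := g_mono hg2 hle2
        omega
      exact quad ht hfv1 hA (by
        have : (t + 1) * 3 ≤ (t + 1) * a := Nat.mul_le_mul_left _ ha3
        omega)

end Aux

namespace Aux

lemma lower_bd : ∀ k v : ℕ, 3 ≤ v → v + f k ≤ k →
    min ((v + 1) * f (v + 1)) ((v + 2) * (f (v + 2) - 1)) ≤ k := by
  intro k
  induction k using Nat.strong_induction_on with
  | _ k IH =>
  intro v hv hk
  have hk8 : 8 ≤ k := by
    by_contra h
    push_neg at h
    interval_cases k <;> simp [f0, f1, f2, f3, f4, f5, f6, f7] at hk <;> omega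
  by_cases hprev : v + f (k - 1) ≤ k - 1
  · exact le_trans (IH (k - 1) (by omega) v hv hprev) (by omega)
  push_neg at hprev
  have hsucc : f k ≤ f (k - 1) + 1 := by
    have := f_succ_le (k - 1)
    rwa [show k - 1 + 1 = k by omega] at this
  have hflt : f k < f (k - 1) + 1 := by omega
  have heq := f_eq5 (show 5 ≤ k by omega)
  rcases fold_cases ((List.range k).filter (fun k1 => 3 ≤ k1 ∧ k1 ∣ k))
      (fun k1 => k - k1 - k / k1 + 1 + max (f k1) (k / k1)) (f (k - 1) + 1) with
    hfold | ⟨k1, hk1mem, hfold⟩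
  · rw [hfold, min_self] at heq; omega
  have hE : f k = k - k1 - k / k1 + 1 + max (f k1) (k / k1) := by
    rw [hfold] at heq
    rcases min_cases (f (k - 1) + 1) (k - k1 - k / k1 + 1 + max (f k1) (k / k1)) with
      ⟨h1, h2⟩ | ⟨h1, h2⟩ <;> omega
  simp only [List.mem_filter, List.mem_range, decide_eq_true_eq] at hk1mem
  obtain ⟨hk1lt, hk13, k2, hk2⟩ := hk1mem
  have hk2ge : 2 ≤ k2 := by
    rcases (show k2 = 0 ∨ k2 = 1 ∨ 2 ≤ k2 by omega) with h | h | h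
    · subst h; simp at hk2; omega
    · subst h; simp at hk2; omega
    · exact h
  have hdiv : k / k1 = k2 := by rw [hk2, Nat.mul_div_cancel_left _ (by omega)]
  rw [hdiv] at hE
  have hid := sub_identity (show 1 ≤ k1 by omega) (show 1 ≤ k2 by omega)
  rw [← hk2] at hid
  have hQ1 : 1 ≤ (k1 - 1) * (k2 - 1) :=
    le_trans (by norm_num) (Nat.mul_le_mul (show 1 ≤ k1 - 1 by omega) (show 1 ≤ k2 - 1 by omega))
  have hkk1 : k1 * 2 ≤ k := by rw [hk2]; exact Nat.mul_le_mul_left _ hk2ge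
  have hkey : v + 1 + max (f k1) k2 ≤ k1 + k2 := by omega
  by_cases hm : f k1 ≤ k2
  · -- case A
    rw [max_eq_right hm] at hkey
    have h1 : v + 1 ≤ k1 := by omega
    have h2 : f (v + 1) ≤ k2 := le_trans (f_mono h1) hm
    calc min ((v + 1) * f (v + 1)) ((v + 2) * (f (v + 2) - 1)) ≤ (v + 1) * f (v + 1) :=
          min_le_left _ _
      _ ≤ k1 * k2 := Nat.mul_le_mul h1 h2
      _ = k := hk2.symm
  · push_neg at hm
    rw [max_eq_left (by omega)] at hkey
    have hfk15 : 5 ≤ k1 := by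
      by_contra h
      push_neg at h
      interval_cases k1 <;> simp [f3, f4] at hm <;> omega
    have hsub2 : f k1 + 2 ≤ k1 := f_le_sub2 (by omega)
    obtain ⟨t, htf⟩ : ∃ t, k1 - f k1 = t := ⟨_, rfl⟩
    have htf' : f k1 + t = k1 := by omega
    have ht2 : 2 ≤ t := by omega
    have hk2t : v + 1 ≤ k2 + t := by omega
    have hk1v : v + 2 ≤ k1 := by omega
    by_cases htv : v ≤ t
    · have hIH := IH k1 (by omega) v hv (by omega)
      exact le_trans hIH (by omega)
    · push_neg at htv
      by_cases hgv2 : t + f (v + 2) ≤ v + 2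
      · calc min ((v + 1) * f (v + 1)) ((v + 2) * (f (v + 2) - 1)) ≤
              (v + 2) * (f (v + 2) - 1) := min_le_right _ _
          _ ≤ k1 * k2 := Nat.mul_le_mul (by omega) (by omega)
          _ = k := hk2.symm
      · push_neg at hgv2
        have hfv2sub : f (v + 2) + 2 ≤ v + 2 := f_le_sub2 (by omega)
        have ht3 : 3 ≤ t := by omega
        have hIH := IH k1 (by omega) t ht3 (by omega)
        obtain ⟨s, hs⟩ : ∃ s, v - t = s := ⟨_, rfl⟩
        have hsv : v = t + s := by omega
        have hs1 : 1 ≤ s := by omega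
        have hKL := KL ht3 hs1 (by rw [show t + s + 2 = v + 2 by omega]; omega)
        calc min ((v + 1) * f (v + 1)) ((v + 2) * (f (v + 2) - 1)) ≤
              (v + 1) * f (v + 1) := min_le_left _ _
          _ = (t + s + 1) * f (t + s + 1) := by rw [show v + 1 = t + s + 1 by omega]
          _ ≤ min ((t + 1) * f (t + 1)) ((t + 2) * (f (t + 2) - 1)) * (s + 1) := hKL
          _ ≤ k1 * (s + 1) := Nat.mul_le_mul_right _ hIH
          _ ≤ k1 * k2 := Nat.mul_le_mul_left _ (by omega)
          _ = k := hk2.symm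

end Aux


/-- For every integer `v ≥ 3`, the least integer `k ≥ 2` such that
`k - f k ≥ v` equals `min ((v+1)·f(v+1)) ((v+2)·(f(v+2) - 1))`. -/
theorem stmt_7 (v : ℕ) (hv : 3 ≤ v) :
    IsLeast {k : ℕ | 2 ≤ k ∧ v + f k ≤ k}
      (min ((v + 1) * f (v + 1)) ((v + 2) * (f (v + 2) - 1))) := by
  constructor
  · simp only [Set.mem_setOf_eq]
    have hf1 : 2 ≤ f (v + 1) := Aux.f_ge2 (by omega)
    have hf2 : 3 ≤ f (v + 2) := Aux.f_ge3 (by omega)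
    rcases min_cases ((v + 1) * f (v + 1)) ((v + 2) * (f (v + 2) - 1)) with ⟨hm, _⟩ | ⟨hm, _⟩ <;>
      rw [hm]
    · have hmb := Aux.mem_bound (x := v + 1) (c := f (v + 1)) (by omega) hf1 le_rfl
      have hge : (v + 1) * 2 ≤ (v + 1) * f (v + 1) := Nat.mul_le_mul_left _ hf1
      constructor
      · omega
      · omega
    · have hmb := Aux.mem_bound (x := v + 2) (c := f (v + 2) - 1) (by omega) (by omega)
        (by omega)
      have hge : (v + 2) * 2 ≤ (v + 2) * (f (v + 2) - 1) :=
        Nat.mul_le_mul_left _ (by omega)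
      constructor
      · omega
      · omega
  · rintro k ⟨hk2, hkv⟩
    exact Aux.lower_bd k v hv hkv
end
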